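/- Performance Difference Lemma: For any two policies π and π' in a finite discounted MDP with discount γ ∈ [0,1), and any initial state distribution ρ, V_ρ^{π'} − V_ρ^{π} = (1/(1−γ)) · E_{s ∼ d_ρ^{π'}} [⟨Q_s^{π}, π'_s − π_s⟩], where d_ρ^{π'} is the discounted state visitation distribution of π' starting from ρ. -/
import Mathlib


open Finset

/-- The probability simplex over a finite action set. -/
def simplex (A : Type*) [Fintype A] : Set (A → ℝ) :=
  {p | (∀ a, 0 ≤ p a) ∧ ∑ a, p a = 1}

/-- **Performance Difference Lemma.** For any two policies `π` and `π'` in a finite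
discounted MDP with `γ ∈ [0,1)` and initial distribution `ρ`,
`V_ρ^{π'} − V_ρ^{π} = (1/(1−γ)) · E_{s ∼ d_ρ^{π'}} [⟨Q_s^{π}, π'_s − π_s⟩]`,
where `d_ρ^{π'}` is the discounted state-visitation distribution of `π'`. -/
theorem performance_difference_lemma
    {S A : Type*} [Fintype S] [Fintype A]
    (γ : ℝ) (hγ0 : 0 ≤ γ) (hγ1 : γ < 1)
    (r : S → A → ℝ) (P : S → A → S → ℝ)
    (hP0 : ∀ s a s', 0 ≤ P s a s') (hP1 : ∀ s a, ∑ s', P s a s' = 1)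
    (ρ : S → ℝ) (hρ0 : ∀ s, 0 ≤ ρ s) (hρ1 : ∑ s, ρ s = 1)
    (π π' : S → A → ℝ) (hπ : ∀ s, π s ∈ simplex A) (hπ' : ∀ s, π' s ∈ simplex A)
    (Q : S → A → ℝ) (V : S → ℝ)
    (hV : ∀ s, V s = ∑ a, π s a * Q s a)
    (hQ : ∀ s a, Q s a = r s a + γ * ∑ s', P s a s' * V s')
    (Q' : S → A → ℝ) (V' : S → ℝ)
    (hV' : ∀ s, V' s = ∑ a, π' s a * Q' s a)
    (hQ' : ∀ s a, Q' s a = r s a + γ * ∑ s', P s a s' * V' s')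
    (d : S → ℝ)
    (hd : ∀ s', d s' = (1 - γ) * ρ s' + γ * ∑ s, ∑ a, d s * π' s a * P s a s') :
    (∑ s, ρ s * V' s) - (∑ s, ρ s * V s)
      = (1 / (1 - γ)) * ∑ s, d s * (∑ a, Q s a * (π' s a - π s a)) := by
  have hγ : (1 - γ) ≠ 0 := by linarith
  set W : S → ℝ := fun s => V' s - V s with hWdef
  -- Q in terms of Q' and W
  have hQW : ∀ s a, Q s a = Q' s a - γ * ∑ s', P s a s' * W s' := by
    intro s a
    have h1 : ∑ s', P s a s' * W s'
        = (∑ s', P s a s' * V' s') - ∑ s', P s a s' * V s' := by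
      rw [← Finset.sum_sub_distrib]
      exact Finset.sum_congr rfl fun s' _ => by simp [hWdef, mul_sub]
    rw [hQ s a, hQ' s a, h1]; ring
  -- ⟨π'_s, Q_s⟩ = V' s - γ * T s
  have hB : ∀ s, ∑ a, π' s a * Q s a
      = V' s - γ * ∑ a, π' s a * ∑ s', P s a s' * W s' := by
    intro s
    have h1 : ∑ a, π' s a * Q s a
        = (∑ a, π' s a * Q' s a) - ∑ a, π' s a * (γ * ∑ s', P s a s' * W s') := by
      rw [← Finset.sum_sub_distrib]
      exact Finset.sum_congr rfl fun a _ => by rw [hQW s a]; ring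
    rw [h1, hV' s]
    congr 1
    rw [Finset.mul_sum]
    exact Finset.sum_congr rfl fun a _ => by ring
  -- advantage identity
  have hAdv : ∀ s, (∑ a, Q s a * (π' s a - π s a))
      = W s - γ * ∑ a, π' s a * ∑ s', P s a s' * W s' := by
    intro s
    have h1 : ∑ a, Q s a * (π' s a - π s a)
        = (∑ a, π' s a * Q s a) - ∑ a, π s a * Q s a := by
      rw [← Finset.sum_sub_distrib]
      exact Finset.sum_congr rfl fun a _ => by ring
    rw [h1, hB s, ← hV s]
    simp only [hWdef]
    ring
  -- sum against d
  have hflow : ∀ s', γ * ∑ s, ∑ a, d s * π' s a * P s a s'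
      = d s' - (1 - γ) * ρ s' := by
    intro s'
    have := hd s'
    linarith
  have hsum : ∑ s, d s * (∑ a, Q s a * (π' s a - π s a))
      = (1 - γ) * ∑ s, ρ s * W s := by
    have h1 : ∑ s, d s * (∑ a, Q s a * (π' s a - π s a))
        = (∑ s, d s * W s)
          - γ * ∑ s, ∑ a, ∑ s', d s * π' s a * P s a s' * W s' := by
      rw [Finset.mul_sum, ← Finset.sum_sub_distrib]
      refine Finset.sum_congr rfl fun s _ => ?_
      rw [hAdv s]
      have h2 : ∑ a, ∑ s', d s * π' s a * P s a s' * W s'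
          = d s * ∑ a, π' s a * ∑ s', P s a s' * W s' := by
        rw [Finset.mul_sum]
        refine Finset.sum_congr rfl fun a _ => ?_
        rw [Finset.mul_sum, Finset.mul_sum]
        exact Finset.sum_congr rfl fun s'' _ => by ring
      rw [h2]; ring
    have h3 : ∑ s, ∑ a, ∑ s', d s * π' s a * P s a s' * W s'
        = ∑ s', (∑ s, ∑ a, d s * π' s a * P s a s') * W s' := by
      calc ∑ s, ∑ a, ∑ s', d s * π' s a * P s a s' * W s'
          = ∑ s, ∑ s', ∑ a, d s * π' s a * P s a s' * W s' :=
            Finset.sum_congr rfl fun s _ => Finset.sum_comm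
        _ = ∑ s', ∑ s, ∑ a, d s * π' s a * P s a s' * W s' := Finset.sum_comm
        _ = ∑ s', (∑ s, ∑ a, d s * π' s a * P s a s') * W s' := by
            refine Finset.sum_congr rfl fun s' _ => ?_
            rw [Finset.sum_mul]
            exact Finset.sum_congr rfl fun s _ => (Finset.sum_mul _ _ _).symm
    have h4 : γ * ∑ s', (∑ s, ∑ a, d s * π' s a * P s a s') * W s'
        = ∑ s', (d s' - (1 - γ) * ρ s') * W s' := by
      rw [Finset.mul_sum]
      refine Finset.sum_congr rfl fun s' _ => ?_
      rw [← mul_assoc, ← hflow s']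
    rw [h1, h3, h4]
    rw [Finset.mul_sum, ← Finset.sum_sub_distrib]
    exact Finset.sum_congr rfl fun s _ => by ring
  have hLHS : (∑ s, ρ s * V' s) - (∑ s, ρ s * V s) = ∑ s, ρ s * W s := by
    rw [← Finset.sum_sub_distrib]
    exact Finset.sum_congr rfl fun s _ => by simp [hWdef, mul_sub]
  rw [hLHS, hsum]
  field_simp
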